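/- Let (ũ_k)_{k≥0} be the Lehmer sequence associated to ζ and η. There exists a constant C > 0, depending only on ζ and η, such that for every integer n ≥ 2 and every δ ∈ [0,1], if A is a random set in B(n, δ) and X := log lcm(ũ_a : a ∈ A), then V(X) ≤ C·δ·n³·log n, where V denotes variance. -/

import Mathlib

open Finset

/-- Decomposition of a Bernoulli-weighted expectation over the powerset of `insert j T`. -/
lemma Epow_insert (δ : ℝ) (j : ℕ) (T : Finset ℕ) (hj : j ∉ T) (g : Finset ℕ → ℝ) :
    ∑ A ∈ (insert j T).powerset, δ ^ A.card * (1 - δ) ^ ((insert j T).card - A.card) * g A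
      = (1 - δ) * ∑ A ∈ T.powerset, δ ^ A.card * (1 - δ) ^ (T.card - A.card) * g A
        + δ * ∑ A ∈ T.powerset, δ ^ A.card * (1 - δ) ^ (T.card - A.card) * g (insert j A) := by
  rw [Finset.sum_powerset_insert hj, Finset.mul_sum, Finset.mul_sum]
  congr 1
  · refine Finset.sum_congr rfl fun A hA => ?_
    have hAT : A ⊆ T := Finset.mem_powerset.1 hA
    have hc : A.card ≤ T.card := Finset.card_le_card hAT
    have h1 : (insert j T).card - A.card = (T.card - A.card) + 1 := by
      rw [Finset.card_insert_of_notMem hj]; omega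
    rw [h1, pow_succ]; ring
  · refine Finset.sum_congr rfl fun A hA => ?_
    have hAT : A ⊆ T := Finset.mem_powerset.1 hA
    have hjA : j ∉ A := fun h => hj (hAT h)
    have h1 : (insert j A).card = A.card + 1 := Finset.card_insert_of_notMem hjA
    have h2 : (insert j T).card - (insert j A).card = T.card - A.card := by
      rw [Finset.card_insert_of_notMem hj, h1]; omega
    rw [h2, h1, pow_succ]; ring

/-- Total mass one. -/
lemma Epow_one (δ : ℝ) (S : Finset ℕ) :
    ∑ A ∈ S.powerset, δ ^ A.card * (1 - δ) ^ (S.card - A.card) = 1 := by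
  induction S using Finset.induction_on with
  | empty => simp
  | @insert j T hj ih =>
    have := Epow_insert δ j T hj (fun _ => 1)
    simp only [mul_one] at this
    rw [this, ih]; ring

/-- Efron–Stein / tensorization bound for the variance under a Bernoulli product
measure on subsets. -/
lemma var_le (δ : ℝ) (h0 : 0 ≤ δ) (h1 : δ ≤ 1) (M : ℕ → ℝ) :
    ∀ (S : Finset ℕ) (f : Finset ℕ → ℝ),
      (∀ i ∈ S, ∀ A ∈ S.powerset, |f (insert i A) - f (A.erase i)| ≤ M i) →
      (∑ A ∈ S.powerset, δ ^ A.card * (1 - δ) ^ (S.card - A.card) * f A ^ 2)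
        - (∑ A ∈ S.powerset, δ ^ A.card * (1 - δ) ^ (S.card - A.card) * f A) ^ 2
        ≤ δ * ∑ i ∈ S, M i ^ 2 := by
  intro S
  induction S using Finset.induction_on with
  | empty => intro f _; simp
  | @insert j T hj ih =>
    intro f hf
    have hMj : 0 ≤ M j := le_trans (abs_nonneg _) (by
      have := hf j (Finset.mem_insert_self j T) ∅ (by simp)
      simpa using this)
    set a := ∑ A ∈ T.powerset, δ ^ A.card * (1 - δ) ^ (T.card - A.card) * f A with ha
    set b := ∑ A ∈ T.powerset, δ ^ A.card * (1 - δ) ^ (T.card - A.card) * f (insert j A) with hb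
    set P := ∑ A ∈ T.powerset, δ ^ A.card * (1 - δ) ^ (T.card - A.card) * f A ^ 2 with hP
    set Q := ∑ A ∈ T.powerset, δ ^ A.card * (1 - δ) ^ (T.card - A.card) * f (insert j A) ^ 2
      with hQ
    have e2 : ∑ A ∈ (insert j T).powerset,
        δ ^ A.card * (1 - δ) ^ ((insert j T).card - A.card) * f A ^ 2
        = (1 - δ) * P + δ * Q := Epow_insert δ j T hj (fun A => f A ^ 2)
    have e1 : ∑ A ∈ (insert j T).powerset,
        δ ^ A.card * (1 - δ) ^ ((insert j T).card - A.card) * f A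
        = (1 - δ) * a + δ * b := Epow_insert δ j T hj f
    rw [e1, e2]
    have hsub : T.powerset ⊆ (insert j T).powerset :=
      Finset.powerset_mono.2 (Finset.subset_insert j T)
    have hVP : P - a ^ 2 ≤ δ * ∑ i ∈ T, M i ^ 2 := by
      refine ih f fun i hi A hA => hf i (Finset.mem_insert_of_mem hi) A (hsub hA)
    have hVQ : Q - b ^ 2 ≤ δ * ∑ i ∈ T, M i ^ 2 := by
      refine ih (fun A => f (insert j A)) fun i hi A hA => ?_
      have hij : i ≠ j := fun h => hj (h ▸ hi)
      have h1 : insert j (insert i A) = insert i (insert j A) := Finset.insert_comm j i A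
      have h2 : insert j (A.erase i) = (insert j A).erase i :=
        (Finset.erase_insert_of_ne hij.symm).symm
      show |f (insert j (insert i A)) - f (insert j (A.erase i))| ≤ M i
      rw [h1, h2]
      exact hf i (Finset.mem_insert_of_mem hi) (insert j A)
        (Finset.mem_powerset.2 (Finset.insert_subset_insert j (Finset.mem_powerset.1 hA)))
    have hab : (a - b) ^ 2 ≤ M j ^ 2 := by
      have habs : |a - b| ≤ M j := by
        have : a - b = ∑ A ∈ T.powerset,
            (δ ^ A.card * (1 - δ) ^ (T.card - A.card) * (f A - f (insert j A))) := by
          rw [ha, hb, ← Finset.sum_sub_distrib]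
          exact Finset.sum_congr rfl fun A hA => by ring
        rw [this]
        calc |∑ A ∈ T.powerset,
              δ ^ A.card * (1 - δ) ^ (T.card - A.card) * (f A - f (insert j A))|
            ≤ ∑ A ∈ T.powerset,
              |δ ^ A.card * (1 - δ) ^ (T.card - A.card) * (f A - f (insert j A))| :=
              Finset.abs_sum_le_sum_abs _ _
          _ ≤ ∑ A ∈ T.powerset, δ ^ A.card * (1 - δ) ^ (T.card - A.card) * M j := by
              refine Finset.sum_le_sum fun A hA => ?_
              have hw : (0:ℝ) ≤ δ ^ A.card * (1 - δ) ^ (T.card - A.card) :=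
                mul_nonneg (pow_nonneg h0 _) (pow_nonneg (by linarith) _)
              rw [abs_mul, abs_of_nonneg hw]
              refine mul_le_mul_of_nonneg_left ?_ hw
              have hjA : j ∉ A := fun h => hj (Finset.mem_powerset.1 hA h)
              have h3 : |f (insert j A) - f (A.erase j)| ≤ M j :=
                hf j (Finset.mem_insert_self j T) A (hsub hA)
              rw [Finset.erase_eq_of_notMem hjA] at h3
              rw [abs_sub_comm] at h3
              exact h3
          _ = M j := by
              rw [← Finset.sum_mul, Epow_one, one_mul]
      have h2 := abs_le.1 habs
      nlinarith [h2.1, h2.2]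
    rw [Finset.sum_insert hj]
    nlinarith [mul_le_mul_of_nonneg_left hVP (by linarith : (0:ℝ) ≤ 1 - δ),
      mul_le_mul_of_nonneg_left hVQ h0,
      mul_le_mul_of_nonneg_left hab h0,
      mul_nonneg h0 (mul_nonneg h0 (sq_nonneg (a - b)))]

/-- There is a constant `C > 0`, depending only on `ζ` and `η`, such
that for every integer `n ≥ 2` and every `δ ∈ [0,1]`, if `A` is a random set in
`B(n, δ)` and `X = log lcm(ũ_a : a ∈ A)`, then `V(X) = E(X²) − E(X)² ≤ C·δ·n³·log n`. -/
theorem stmt_17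
    (ζ η : ℂ) (c₁ c₂ : ℤ)
    (hc₁ : (c₁ : ℂ) = (ζ + η) ^ 2) (hc₂ : (c₂ : ℂ) = ζ * η)
    (hc₁0 : c₁ ≠ 0) (hc₂0 : c₂ ≠ 0) (hcop : IsCoprime c₁ c₂)
    (habs : ‖η‖ ≤ ‖ζ‖)
    (hru : ∀ k : ℕ, 0 < k → (ζ / η) ^ k ≠ 1)
    (u : ℕ → ℤ)
    (hu : ∀ k : ℕ, (u k : ℂ) =
      if Odd k then (ζ ^ k - η ^ k) / (ζ - η) else (ζ ^ k - η ^ k) / (ζ ^ 2 - η ^ 2))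
    (hu0 : ∀ k : ℕ, 0 < k → u k ≠ 0) :
    ∃ C : ℝ, 0 < C ∧ ∀ n : ℕ, 2 ≤ n → ∀ δ : ℝ, δ ∈ Set.Icc (0 : ℝ) 1 →
      (∑ A ∈ (Finset.Icc 1 n).powerset,
          δ ^ A.card * (1 - δ) ^ (n - A.card) * Real.log ((A.lcm u : ℤ) : ℝ) ^ 2) -
        (∑ A ∈ (Finset.Icc 1 n).powerset,
          δ ^ A.card * (1 - δ) ^ (n - A.card) * Real.log ((A.lcm u : ℤ) : ℝ)) ^ 2 ≤
      C * δ * (n : ℝ) ^ 3 * Real.log n := by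
  -- basic facts about ζ and η
  have hη : η ≠ 0 := by
    intro h
    apply hc₂0
    have : (c₂ : ℂ) = 0 := by rw [hc₂, h, mul_zero]
    exact_mod_cast this
  have hz1 : 1 ≤ ‖ζ‖ := by
    have h1 : (1:ℝ) ≤ |(c₂ : ℝ)| := by
      have := Int.one_le_abs hc₂0
      exact_mod_cast this
    have h2 : ‖((c₂ : ℂ))‖ = |(c₂ : ℝ)| := Complex.norm_intCast c₂
    rw [hc₂, norm_mul] at h2
    nlinarith [norm_nonneg η, norm_nonneg ζ, habs]
  have hζη : ζ ≠ η := by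
    intro h
    exact hru 1 one_pos (by rw [pow_one, h, div_self hη])
  have hζη2 : ζ ^ 2 ≠ η ^ 2 := by
    intro h
    exact hru 2 two_pos (by rw [div_pow, h, div_self (pow_ne_zero 2 hη)])
  have hd1 : 0 < ‖(ζ - η)‖ := norm_pos_iff.mpr (sub_ne_zero.2 hζη)
  have hd2 : 0 < ‖(ζ ^ 2 - η ^ 2)‖ := norm_pos_iff.mpr (sub_ne_zero.2 hζη2)
  set G := max |Real.log (‖(ζ - η)‖)| |Real.log (‖(ζ ^ 2 - η ^ 2)‖)|
    with hGdef
  have hG : 0 ≤ G := le_trans (abs_nonneg _) (le_max_left _ _)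
  have hlog2 : 0 < Real.log 2 := Real.log_pos one_lt_two
  have hlogz : 0 ≤ Real.log (‖ζ‖) := Real.log_nonneg hz1
  set L := Real.log 2 + Real.log (‖ζ‖) + G with hLdef
  have hL : 0 < L := by rw [hLdef]; linarith
  -- the key growth bound on the Lehmer sequence
  have hukey : ∀ k : ℕ, 1 ≤ k → Real.log |(u k : ℝ)| ≤ (k : ℝ) * L := by
    intro k hk
    have hne : u k ≠ 0 := hu0 k hk
    obtain ⟨D, hD0, hDG, hDeq⟩ : ∃ D : ℂ, 0 < ‖D‖ ∧
        |Real.log (‖D‖)| ≤ G ∧ (u k : ℂ) = (ζ ^ k - η ^ k) / D := by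
      by_cases hodd : Odd k
      · exact ⟨ζ - η, hd1, le_max_left _ _, by simp [hu k, hodd]⟩
      · exact ⟨ζ ^ 2 - η ^ 2, hd2, le_max_right _ _, by simp [hu k, hodd]⟩
    have hNum : ‖(ζ ^ k - η ^ k)‖ ≤ 2 * ‖ζ‖ ^ k := by
      calc ‖(ζ ^ k - η ^ k)‖ ≤ ‖(ζ ^ k)‖ + ‖(η ^ k)‖ := by
            exact norm_sub_le _ _
        _ ≤ ‖ζ‖ ^ k + ‖ζ‖ ^ k := by
            rw [norm_pow, norm_pow]
            exact add_le_add le_rfl (pow_le_pow_left₀ (norm_nonneg η) habs k)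
        _ = 2 * ‖ζ‖ ^ k := by ring
    have habsu : |(u k : ℝ)| = ‖((u k : ℂ))‖ := (Complex.norm_intCast (u k)).symm
    have hueq : |(u k : ℝ)| = ‖(ζ ^ k - η ^ k)‖ / ‖D‖ := by
      rw [habsu, hDeq, norm_div]
    have hzpos : (0:ℝ) < ‖ζ‖ := lt_of_lt_of_le one_pos hz1
    have hzk : (0:ℝ) < ‖ζ‖ ^ k := pow_pos hzpos k
    have hupos : (0:ℝ) < |(u k : ℝ)| := by
      rw [abs_pos]
      exact_mod_cast hne
    have hub : |(u k : ℝ)| ≤ 2 * ‖ζ‖ ^ k / ‖D‖ := by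
      rw [hueq]
      exact div_le_div_of_nonneg_right hNum hD0.le
    have hlogle := Real.log_le_log hupos hub
    rw [Real.log_div (by positivity) (ne_of_gt hD0),
      Real.log_mul two_ne_zero (ne_of_gt hzk), Real.log_pow] at hlogle
    have hk1 : (1:ℝ) ≤ (k:ℝ) := by exact_mod_cast hk
    have hnegD : -Real.log (‖D‖) ≤ G := by
      have := (abs_le.1 hDG).1
      linarith
    rw [hLdef]
    nlinarith [mul_nonneg (sub_nonneg.2 hk1) hlog2.le,
      mul_nonneg (sub_nonneg.2 hk1) hG]
  -- positivity of lcm's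
  have hlcm_pos : ∀ A : Finset ℕ, (∀ a ∈ A, 1 ≤ a) → 0 < A.lcm u := by
    intro A hA
    have hne : A.lcm u ≠ 0 := by
      intro h0
      rw [Finset.lcm_eq_zero_iff] at h0
      obtain ⟨a, haA, ha0⟩ := h0
      exact hu0 a (hA a haA) ha0
    have hnn : 0 ≤ A.lcm u := by
      have h1 : |A.lcm u| = A.lcm u := by
        rw [Int.abs_eq_normalize, Finset.normalize_lcm]
      rw [← h1]
      exact abs_nonneg _
    exact lt_of_le_of_ne hnn (Ne.symm hne)
  refine ⟨L ^ 2 / Real.log 2, by positivity, ?_⟩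
  intro n hn δ hδ
  obtain ⟨hδ0, hδ1⟩ := hδ
  -- the oscillation bound
  have hosc : ∀ i ∈ Finset.Icc 1 n, ∀ A ∈ (Finset.Icc 1 n).powerset,
      |Real.log (((insert i A).lcm u : ℤ) : ℝ) - Real.log (((A.erase i).lcm u : ℤ) : ℝ)|
        ≤ (i : ℝ) * L := by
    intro i hi A hA
    have hi1 : 1 ≤ i := (Finset.mem_Icc.1 hi).1
    have hAsub : A ⊆ Finset.Icc 1 n := Finset.mem_powerset.1 hA
    set m := (A.erase i).lcm u with hm
    set Mi := (insert i A).lcm u with hMi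
    have hm_pos : 0 < m := hlcm_pos _
      (fun a ha => (Finset.mem_Icc.1 (hAsub (Finset.mem_of_mem_erase ha))).1)
    have hM_pos : 0 < Mi := hlcm_pos _ (fun a ha => by
      rcases Finset.mem_insert.1 ha with rfl | h
      · exact hi1
      · exact (Finset.mem_Icc.1 (hAsub h)).1)
    have hdvd1 : m ∣ Mi := Finset.lcm_dvd fun b hb =>
      Finset.dvd_lcm (Finset.mem_insert_of_mem (Finset.mem_of_mem_erase hb))
    have hdvd2 : Mi ∣ u i * m := Finset.lcm_dvd fun b hb => by
      rcases Finset.mem_insert.1 hb with rfl | h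
      · exact dvd_mul_right _ _
      · by_cases hbi : b = i
        · subst hbi; exact dvd_mul_right _ _
        · exact dvd_mul_of_dvd_right
            (Finset.dvd_lcm (Finset.mem_erase.2 ⟨hbi, h⟩)) _
    have hle1 : m ≤ Mi := Int.le_of_dvd hM_pos hdvd1
    have hle2 : Mi ≤ |u i| * m := by
      have h3 : Mi ∣ |u i * m| := (dvd_abs _ _).2 hdvd2
      have h4 : 0 < |u i * m| := abs_pos.2 (mul_ne_zero (hu0 i hi1) (ne_of_gt hm_pos))
      have h5 := Int.le_of_dvd h4 h3
      rwa [abs_mul, abs_of_nonneg hm_pos.le] at h5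
    have hmr : (0:ℝ) < (m : ℝ) := by exact_mod_cast hm_pos
    have hMr : (0:ℝ) < (Mi : ℝ) := by exact_mod_cast hM_pos
    have hlow : 0 ≤ Real.log ((Mi : ℤ) : ℝ) - Real.log ((m : ℤ) : ℝ) :=
      sub_nonneg.2 (Real.log_le_log hmr (by exact_mod_cast hle1))
    have hup : Real.log ((Mi : ℤ) : ℝ) - Real.log ((m : ℤ) : ℝ) ≤ (i : ℝ) * L := by
      have h6 : Real.log ((Mi : ℤ) : ℝ) ≤ Real.log (|(u i : ℝ)| * (m : ℝ)) := by
        refine Real.log_le_log hMr ?_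
        have hcast : ((|u i| * m : ℤ) : ℝ) = |(u i : ℝ)| * (m : ℝ) := by push_cast; ring
        rw [← hcast]
        exact_mod_cast hle2
      rw [Real.log_mul (abs_ne_zero.mpr (Int.cast_ne_zero.mpr (hu0 i hi1)))
        (ne_of_gt hmr)] at h6
      have h7 := hukey i hi1
      linarith
    rw [abs_of_nonneg hlow]
    exact hup
  -- apply the tensorization lemma
  have hvar := var_le δ hδ0 hδ1 (fun i => (i : ℝ) * L) (Finset.Icc 1 n)
    (fun A => Real.log ((A.lcm u : ℤ) : ℝ)) hosc
  have hcard : (Finset.Icc 1 n).card = n := by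
    rw [Nat.card_Icc]; omega
  simp only [hcard] at hvar
  refine le_trans hvar ?_
  -- final arithmetic
  have hsum : ∑ i ∈ Finset.Icc 1 n, ((i : ℝ) * L) ^ 2 ≤ (n : ℝ) * ((n : ℝ) * L) ^ 2 := by
    calc ∑ i ∈ Finset.Icc 1 n, ((i : ℝ) * L) ^ 2
        ≤ ∑ _i ∈ Finset.Icc 1 n, ((n : ℝ) * L) ^ 2 := by
          refine Finset.sum_le_sum fun i hi => ?_
          have hi_le : (i : ℝ) ≤ (n : ℝ) := by
            exact_mod_cast (Finset.mem_Icc.1 hi).2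
          have h8 : (0:ℝ) ≤ (i : ℝ) * L := mul_nonneg (Nat.cast_nonneg i) hL.le
          exact pow_le_pow_left₀ h8 (mul_le_mul_of_nonneg_right hi_le hL.le) 2
      _ = (n : ℝ) * ((n : ℝ) * L) ^ 2 := by
          rw [Finset.sum_const, hcard, nsmul_eq_mul]
  have hlogn : Real.log 2 ≤ Real.log n :=
    Real.log_le_log two_pos (by exact_mod_cast hn)
  calc δ * ∑ i ∈ Finset.Icc 1 n, ((i : ℝ) * L) ^ 2
      ≤ δ * ((n : ℝ) * ((n : ℝ) * L) ^ 2) := mul_le_mul_of_nonneg_left hsum hδ0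
    _ = L ^ 2 / Real.log 2 * (δ * (n : ℝ) ^ 3) * Real.log 2 := by
        field_simp
    _ ≤ L ^ 2 / Real.log 2 * (δ * (n : ℝ) ^ 3) * Real.log n := by
        refine mul_le_mul_of_nonneg_left hlogn ?_
        have := div_nonneg (sq_nonneg L) hlog2.le
        positivity
    _ = L ^ 2 / Real.log 2 * δ * (n : ℝ) ^ 3 * Real.log n := by ring
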